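/- For any positive integers n and d, the alternating sum ∑_{i=1}^n (-1)^{i-1} C(n,i) / i^d equals the sum over all weakly increasing d-tuples 1 ≤ i_1 ≤ i_2 ≤ ... ≤ i_d ≤ n of 1/(i_1 i_2 ··· i_d). -/

import Mathlib

open Finset
open scoped Classical

noncomputable def Ldil (n d : ℕ) : ℚ :=
  ∑ i ∈ Finset.Icc 1 n, (-1 : ℚ) ^ (i - 1) * (n.choose i : ℚ) / (i : ℚ) ^ d

lemma Lzero (d : ℕ) : Ldil 0 d = 0 := by simp [Ldil]

lemma Lbase (n : ℕ) (hn : 0 < n) : Ldil n 0 = 1 := by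
  have h := Int.alternating_sum_range_choose (n := n)
  rw [if_neg hn.ne'] at h
  have hQ : ∑ i ∈ range (n+1), (-1:ℚ)^i * (n.choose i : ℚ) = 0 := by
    exact_mod_cast congrArg (fun z : ℤ => (z : ℚ)) h
  have hins : range (n+1) = insert 0 (Icc 1 n) := by
    ext x; simp [Finset.mem_range, Finset.mem_Icc]; omega
  rw [hins, Finset.sum_insert (by simp)] at hQ
  simp only [pow_zero, Nat.choose_zero_right, Nat.cast_one, one_mul] at hQ
  have h2 : ∑ i ∈ Icc 1 n, (-1:ℚ)^i * (n.choose i : ℚ) = -1 := by linarith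
  have h3 : Ldil n 0 = ∑ i ∈ Icc 1 n, -((-1:ℚ)^i * (n.choose i : ℚ)) := by
    rw [Ldil]
    refine Finset.sum_congr rfl fun i hi => ?_
    obtain ⟨h1, _⟩ := Finset.mem_Icc.mp hi
    have hi1 : i - 1 + 1 = i := by omega
    have e : (-1:ℚ)^i = -(-1:ℚ)^(i-1) := by
      conv_lhs => rw [← hi1]
      rw [pow_succ]; ring
    rw [pow_zero, div_one, e]; ring
  rw [h3, Finset.sum_neg_distrib, h2]; norm_num

lemma Lrec (n d : ℕ) : Ldil (n+1) (d+1) = Ldil n (d+1) + Ldil (n+1) d / (n+1) := by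
  have key : ∀ i ∈ Icc 1 (n+1), (-1:ℚ)^(i-1) * (((n+1).choose i : ℕ) : ℚ) / (i:ℚ)^(d+1)
      = (-1:ℚ)^(i-1) * ((n.choose i : ℕ) : ℚ) / (i:ℚ)^(d+1)
        + ((-1:ℚ)^(i-1) * (((n+1).choose i : ℕ) : ℚ) / (i:ℚ)^d) / ((n:ℚ)+1) := by
    intro i hi
    obtain ⟨h1, h2⟩ := Finset.mem_Icc.mp hi
    obtain ⟨k, rfl⟩ : ∃ k, i = k + 1 := ⟨i - 1, by omega⟩
    have h3 : ((n:ℚ)+1) * (n.choose k : ℚ) = ((n+1).choose (k+1) : ℚ) * ((k:ℚ)+1) := by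
      exact_mod_cast Nat.add_one_mul_choose_eq n k
    have h4 : (((n+1).choose (k+1) : ℕ) : ℚ) = (n.choose k : ℚ) + (n.choose (k+1) : ℚ) := by
      exact_mod_cast Nat.choose_succ_succ n k
    have hk0 : ((k:ℚ)+1) ≠ 0 := by positivity
    have hn0 : ((n:ℚ)+1) ≠ 0 := by positivity
    have hmain : ((n:ℚ)+1) * (((n+1).choose (k+1) : ℕ) : ℚ)
        = ((n:ℚ)+1) * (n.choose (k+1) : ℚ) + ((k:ℚ)+1) * (((n+1).choose (k+1) : ℕ) : ℚ) := by
      linear_combination ((n:ℚ)+1) * h4 + h3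
    push_cast
    simp only [Nat.add_sub_cancel, pow_succ]
    set a := (((n+1).choose (k+1):ℕ):ℚ) with ha
    set b := ((n.choose (k+1):ℕ):ℚ) with hb
    set K := ((k:ℚ)+1)^d with hK
    have hK0 : K ≠ 0 := by positivity
    have hP : K * ((k:ℚ)+1) ≠ 0 := mul_ne_zero hK0 hk0
    rw [div_div, div_add_div _ _ hP (mul_ne_zero hK0 hn0),
      div_eq_div_iff hP (mul_ne_zero hP (mul_ne_zero hK0 hn0))]
    linear_combination ((-1:ℚ)^k * K * K * ((k:ℚ)+1)) * hmain
  rw [Ldil, Finset.sum_congr rfl key, Finset.sum_add_distrib]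
  congr 1
  · rw [Finset.sum_Icc_succ_top (by omega), Nat.choose_succ_self]
    simp [Ldil]
  · rw [Ldil, Finset.sum_div]

noncomputable def Rdil (n d : ℕ) : ℚ :=
  ∑ f ∈ Finset.univ.filter (fun f : Fin d → Fin n => Monotone f),
          ∏ k, (1 / ((f k : ℕ) + 1 : ℚ))
lemma Rbase (n : ℕ) : Rdil n 0 = 1 := by
  rw [Rdil]
  rw [Finset.filter_true_of_mem (fun f _ => by intro a; exact a.elim0)]
  simp

lemma Rzero (d : ℕ) : Rdil 0 (d+1) = 0 := by
  rw [Rdil]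
  have : (Finset.univ : Finset (Fin (d+1) → Fin 0)) = ∅ := Finset.univ_eq_empty
  rw [this]
  simp

lemma Rrec (n d : ℕ) : Rdil (n+1) (d+1) = Rdil n (d+1) + Rdil (n+1) d / (n+1) := by
  rw [Rdil, ← Finset.sum_filter_add_sum_filter_not
    (univ.filter (fun f : Fin (d+1) → Fin (n+1) => Monotone f))
    (fun f => f (Fin.last d) ≠ Fin.last n),
    Finset.filter_filter, Finset.filter_filter]
  congr 1
  · -- part A : range inside Fin n
    rw [Rdil]
    refine Finset.sum_bij' (i := fun f hf k => (⟨(f k : ℕ), ?_⟩ : Fin n))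
      (j := fun g hg k => (g k).castSucc) ?_ ?_ ?_ ?_ ?_
    · -- value bound
      obtain ⟨-, hmono, hne⟩ := Finset.mem_filter.mp hf
      have h1 : f k ≤ f (Fin.last d) := hmono (Fin.le_last k)
      have h2 : (f (Fin.last d) : ℕ) < n := Fin.val_lt_last hne
      omega
    · -- i maps into target
      intro f hf
      obtain ⟨-, hmono, hne⟩ := Finset.mem_filter.mp hf
      refine Finset.mem_filter.mpr ⟨Finset.mem_univ _, ?_⟩
      intro x y hxy
      exact hmono hxy
    · -- j maps into source
      intro g hg
      obtain ⟨-, hmono⟩ := Finset.mem_filter.mp hg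
      refine Finset.mem_filter.mpr ⟨Finset.mem_univ _, ?_, ?_⟩
      · intro x y hxy
        exact Fin.castSucc_le_castSucc_iff.mpr (hmono hxy)
      · intro h
        have := congrArg Fin.val h
        simp only [Fin.coe_castSucc, Fin.val_last] at this
        exact absurd this (g (Fin.last d)).isLt.ne
    · intro f hf
      funext k
      exact Fin.ext rfl
    · intro g hg
      funext k
      exact Fin.ext rfl
    · intro f hf
      exact Finset.prod_congr rfl fun k _ => rfl
  · -- part B : last value is n
    rw [Rdil, Finset.sum_div]
    refine Finset.sum_bij' (i := fun f hf => f ∘ Fin.castSucc)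
      (j := fun g hg => Fin.snoc g (Fin.last n)) ?_ ?_ ?_ ?_ ?_
    · intro f hf
      obtain ⟨-, hmono, -⟩ := Finset.mem_filter.mp hf
      exact Finset.mem_filter.mpr ⟨Finset.mem_univ _,
        fun x y hxy => hmono (Fin.castSucc_le_castSucc_iff.mpr hxy)⟩
    · intro g hg
      obtain ⟨-, hmono⟩ := Finset.mem_filter.mp hg
      refine Finset.mem_filter.mpr ⟨Finset.mem_univ _, ?_, ?_⟩
      · intro a b hab
        by_cases hb : b = Fin.last d
        · subst hb
          rw [Fin.snoc_last]
          exact Fin.le_last _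
        · have hb' : (b : ℕ) < d := Fin.val_lt_last hb
          have ha' : (a : ℕ) < d := lt_of_le_of_lt hab hb'
          have ea : a = Fin.castSucc ⟨(a : ℕ), ha'⟩ := Fin.ext rfl
          have eb : b = Fin.castSucc ⟨(b : ℕ), hb'⟩ := Fin.ext rfl
          rw [ea, eb, Fin.snoc_castSucc, Fin.snoc_castSucc]
          exact hmono hab
      · intro h
        rw [Fin.snoc_last] at h
        simp at h
    · intro f hf
      obtain ⟨-, hmono, hlast⟩ := Finset.mem_filter.mp hf
      rw [not_not] at hlast
      funext b
      by_cases hb : b = Fin.last d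
      · subst hb; rw [Fin.snoc_last, hlast]
      · have hb' : (b : ℕ) < d := Fin.val_lt_last hb
        have eb : b = Fin.castSucc ⟨(b : ℕ), hb'⟩ := Fin.ext rfl
        rw [eb, Fin.snoc_castSucc]
        rfl
    · intro g hg
      funext k
      simp [Fin.snoc_castSucc]
    · intro f hf
      obtain ⟨-, hmono, hlast⟩ := Finset.mem_filter.mp hf
      rw [not_not] at hlast
      rw [Fin.prod_univ_castSucc, hlast]
      simp only [Fin.val_last]
      rw [div_eq_mul_one_div]
      simp [Function.comp]
      ring

noncomputable def Tdil : ℕ → ℕ → ℚ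
  | _, 0 => 1
  | 0, _+1 => 0
  | n+1, d+1 => Tdil n (d+1) + Tdil (n+1) d / (n+1)
termination_by n d => n + d

lemma Trec (n d : ℕ) : Tdil (n+1) (d+1) = Tdil n (d+1) + Tdil (n+1) d / (n+1) := by
  rw [Tdil]

lemma LTdil : ∀ n d : ℕ, 0 < n + d → Ldil n d = Tdil n d
  | n, 0 => fun h => by rw [Lbase n (by omega)]; simp [Tdil]
  | 0, d+1 => fun _ => by rw [Lzero]; simp [Tdil]
  | n+1, d+1 => fun _ => by
      rw [Lrec, Trec]
      rcases Nat.eq_zero_or_pos n with rfl | hn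
      · rw [Lzero, LTdil 1 d (by omega)]; simp [Tdil]
      · rw [LTdil n (d+1) (by omega), LTdil (n+1) d (by omega)]
termination_by n d => n + d

lemma RT : ∀ n d : ℕ, Rdil n d = Tdil n d
  | n, 0 => by rw [Rbase]; simp [Tdil]
  | 0, d+1 => by rw [Rzero]; simp [Tdil]
  | n+1, d+1 => by rw [Rrec, RT n (d+1), RT (n+1) d, Trec]
termination_by n d => n + d

/-- Dilcher's identity. -/
theorem dilcher (n d : ℕ) (hn : 0 < n) (hd : 0 < d) :
    ∑ i ∈ Finset.Icc 1 n, (-1 : ℚ) ^ (i - 1) * (n.choose i : ℚ) / (i : ℚ) ^ d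
      = ∑ f ∈ Finset.univ.filter (fun f : Fin d → Fin n => Monotone f),
          ∏ k, (1 / ((f k : ℕ) + 1 : ℚ)) := by
  have h1 : Ldil n d = Tdil n d := LTdil n d (by omega)
  have h2 : Rdil n d = Tdil n d := RT n d
  show Ldil n d = Rdil n d
  rw [h1, h2]
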